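/- Let γ, R > 0, let j be an integer, and let w ∈ ℂ be such that w² + iγ does not lie in the half-line (−∞, 0]. Let z := sq₋(w² + iγ) and h(w) := (z − w)/(z + w) (both z − w and z + w are nonzero since z² − w² = iγ ≠ 0). If w = (i/(2R))·(log₋(h(w)) + 2πij), where log₋ ζ := ln|ζ| + i·arg₋(ζ), then (z − w)·e^{iRw} − (z + w)·e^{−iRw} = 0. -/

import Mathlib

/-- The argument in `[-π, π)`: it agrees with the principal argument `Complex.arg`
except on the negative real axis, where it takes the value `-π`. -/
noncomputable def argm (ζ : ℂ) : ℝ :=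
  if Complex.arg ζ = Real.pi then -Real.pi else Complex.arg ζ

/-- The branch `sq₋` of the square root with branch cut along the negative real axis:
`sq₋(ζ) = √|ζ|·exp(i·arg₋(ζ)/2)`. -/
noncomputable def sqm (ζ : ℂ) : ℂ :=
  (Real.sqrt ‖ζ‖ : ℂ) * Complex.exp (Complex.I * (argm ζ) / 2)

/-- The branch `log₋` of the logarithm: `log₋ ζ = ln|ζ| + i·arg₋(ζ)`. -/
noncomputable def logm (ζ : ℂ) : ℂ :=
  (Real.log ‖ζ‖ : ℂ) + Complex.I * (argm ζ)

lemma exp_I_argm (ζ : ℂ) : Complex.exp (Complex.I * argm ζ) = Complex.exp (Complex.I * ζ.arg) := by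
  unfold argm
  split_ifs with h
  · rw [h]
    push_cast
    rw [mul_neg, Complex.exp_neg]
    rw [show (Complex.I * Real.pi) = Real.pi * Complex.I by ring, Complex.exp_pi_mul_I]
    norm_num
  · rfl

lemma sqm_sq (ζ : ℂ) : sqm ζ ^ 2 = ζ := by
  unfold sqm
  rw [mul_pow, ← Complex.exp_nat_mul]
  have h1 : ((Real.sqrt ‖ζ‖ : ℂ)) ^ 2 = (‖ζ‖ : ℂ) := by
    norm_cast
    exact Real.sq_sqrt (norm_nonneg ζ)
  rw [h1, show ((2:ℕ):ℂ) * (Complex.I * (argm ζ) / 2) = Complex.I * argm ζ by push_cast; ring,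
    exp_I_argm, show Complex.I * (ζ.arg:ℂ) = (ζ.arg:ℂ) * Complex.I by ring,
    Complex.norm_mul_exp_arg_mul_I]

lemma exp_logm (ζ : ℂ) (h : ζ ≠ 0) : Complex.exp (logm ζ) = ζ := by
  unfold logm
  rw [Complex.exp_add, ← Complex.ofReal_exp, Real.exp_log (norm_pos_iff.mpr h), exp_I_argm,
    show Complex.I * (ζ.arg:ℂ) = (ζ.arg:ℂ) * Complex.I by ring, Complex.norm_mul_exp_arg_mul_I]

/-- If `w² + iγ` is not on the half-line `(−∞,0]` and `w` solves the fixed point equation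
`w = (i/(2R))·(log₋ h(w) + 2πij)` with `h(w) = (z−w)/(z+w)`, `z = sq₋(w² + iγ)`, then
`(z − w)·e^{iRw} − (z + w)·e^{−iRw} = 0`, i.e. `w² + iγ` solves the eigenvalue equation
for the dissipative barrier potential `iγχ_{[0,R]}`. -/
theorem fixed_point_implies_eigenvalue_equation
    (γ R : ℝ) (hγ : 0 < γ) (hR : 0 < R) (j : ℤ) (w : ℂ)
    (hnot : ¬ ((w ^ 2 + Complex.I * γ).im = 0 ∧ (w ^ 2 + Complex.I * γ).re ≤ 0))
    (hfix : w = (Complex.I / (2 * R)) *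
      (logm ((sqm (w ^ 2 + Complex.I * γ) - w) / (sqm (w ^ 2 + Complex.I * γ) + w)) +
        2 * Real.pi * Complex.I * j)) :
    (sqm (w ^ 2 + Complex.I * γ) - w) * Complex.exp (Complex.I * R * w) -
      (sqm (w ^ 2 + Complex.I * γ) + w) * Complex.exp (-(Complex.I * R * w)) = 0 := by
  set ζ := w ^ 2 + Complex.I * γ with hζ
  set z := sqm ζ with hz
  have hzsq : z ^ 2 = ζ := sqm_sq ζ
  have hiγ : (Complex.I * γ : ℂ) ≠ 0 := by
    simp [Complex.ext_iff, hγ.ne']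
  have hsub : z - w ≠ 0 := by
    intro h
    have : z = w := by linear_combination h
    apply hiγ
    have : w ^ 2 = ζ := by rw [← this, hzsq]
    linear_combination -this
  have hadd : z + w ≠ 0 := by
    intro h
    have : z = -w := by linear_combination h
    apply hiγ
    have : w ^ 2 = ζ := by rw [← hzsq, this]; ring
    linear_combination -this
  have hh : (z - w) / (z + w) ≠ 0 := div_ne_zero hsub hadd
  have hR' : (R : ℂ) ≠ 0 := by exact_mod_cast hR.ne'
  set L := logm ((z - w) / (z + w)) + 2 * Real.pi * Complex.I * (j:ℂ) with hLdef
  have hfix' : w * (2 * R) = Complex.I * L := by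
    rw [hfix]; field_simp
  have hL : -(2 * Complex.I * R * w) = L := by
    have hI := Complex.I_sq
    linear_combination -Complex.I * hfix' - L * hI
  have hexp : Complex.exp (-(2 * Complex.I * R * w)) = (z - w) / (z + w) := by
    rw [hL, hLdef, Complex.exp_add, exp_logm _ hh,
      show (2 * Real.pi * Complex.I * j : ℂ) = (j : ℂ) * (2 * Real.pi * Complex.I) by ring,
      Complex.exp_int_mul_two_pi_mul_I, mul_one]
  have key : (z + w) * Complex.exp (-(Complex.I * R * w)) =
      (z - w) * Complex.exp (Complex.I * R * w) := by
    have h2 : Complex.exp (-(Complex.I * R * w)) =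
        Complex.exp (-(2 * Complex.I * R * w)) * Complex.exp (Complex.I * R * w) := by
      rw [← Complex.exp_add]; ring_nf
    rw [h2, hexp]
    field_simp
  linear_combination -key
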